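/- There exists a constant C > 0 with the following property. Let a, b be real numbers and k₁, k₂, k₃, k₄ integers with |k₄| > 16·max{1, |a|, |b|} and k₁+k₂+k₃ ≠ 0, and assume at least one of: (i) |k₄| > 4·|k₃| and |k₃| > 16·|k₂| and |k₂| ≥ |k₁|; (ii) |k₄|^{4/5} > 64·|k₃| and |k₃| ≥ |k₂| ≥ |k₁|; (iii) |k₄| > 64·|k₃| and |k₃| ≥ |k₂| ≥ |k₁| and |k₁+k₂+k₃| > 16·|k₁|. Then Φ_a^(4)(k₁,k₂,k₃,k₄) ≠ 0, Φ_b^(4)(k₁,k₂,k₃,k₄) ≠ 0, and |1/Φ_a^(4)(k₁,k₂,k₃,k₄) − 1/Φ_b^(4)(k₁,k₂,k₃,k₄)| ≤ C · (|a−b| / (|k₁+k₂+k₃|·|k₄|)) · min{ 1/|Φ_a^(4)(k₁,k₂,k₃,k₄)|, 1/|Φ_b^(4)(k₁,k₂,k₃,k₄)| }. -/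

import Mathlib

/-- `p a k = -k^5 + a·k^3`, the linear dispersion symbol (phase divided by `i`). -/
noncomputable def p (a : ℝ) (k : ℤ) : ℝ := -(k : ℝ) ^ 5 + a * (k : ℝ) ^ 3

/-- The quartic phase function `Φ_a^(4)`. -/
noncomputable def Phi4 (a : ℝ) (k₁ k₂ k₃ k₄ : ℤ) : ℝ :=
  p a (k₁ + k₂ + k₃ + k₄) - (p a k₁ + p a k₂ + p a k₃ + p a k₄)


/-- bounds derived in case (i) -/
lemma caseA (x1 x2 x3 x4 : ℝ)
    (h1 : 4* |x3| < |x4|) (h2 : 16* |x2| < |x3|) (h3 : |x1| ≤ |x2|) :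
    |x1+x2+x3| ≤ 9/32* |x4| ∧ |(x1+x2)*(x2+x3)*(x1+x3)| ≤ |x4|^3/16 ∧
    |(x1+x2)*(x2+x3)*(x1+x3)| * ((x1+x2+x3)^2+x1^2+x2^2+x3^2)
      ≤ |x1+x2+x3| * |x4|^4/5 := by
  have hK10 : 0 ≤ |x1| := abs_nonneg _
  have hK20 : 0 ≤ |x2| := abs_nonneg _
  have hK30 : 0 < |x3| := lt_of_le_of_lt (by positivity) h2
  have hK40 : 0 < |x4| := lt_of_le_of_lt (by positivity) h1
  have hMu : |x1+x2+x3| ≤ 9/8* |x3| := by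
    calc |x1+x2+x3| ≤ |x1| + |x2| + |x3| := abs_add_three _ _ _
      _ ≤ 9/8* |x3| := by linarith
  have hx3 : |x3| ≤ |x1+x2+x3| + (|x1| + |x2|) := by
    calc |x3| = |(x1+x2+x3) + (-(x1+x2))| := by ring_nf
      _ ≤ |x1+x2+x3| + |(-(x1+x2))| := abs_add_le _ _
      _ ≤ |x1+x2+x3| + (|x1| + |x2|) := by
          have := abs_add_le x1 x2
          simp only [abs_neg]
          linarith
  have hMl : 7/8* |x3| ≤ |x1+x2+x3| := by linarith
  have hsig0 : |(x1+x2)*(x2+x3)*(x1+x3)| ≤ (|x1|+|x2|)*(|x2|+|x3|)*(|x1|+|x3|) := by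
    rw [abs_mul, abs_mul]
    gcongr <;> first | positivity | exact abs_add_le _ _
  have hsig1 : (|x1|+|x2|)*(|x2|+|x3|)*(|x1|+|x3|) ≤ (1/8* |x3|)*(17/16* |x3|)*(17/16* |x3|) := by
    gcongr <;> linarith
  have hT : (x1+x2+x3)^2+x1^2+x2^2+x3^2 ≤ 273/64* |x3|^2 := by
    have e1 : (x1+x2+x3)^2 = |x1+x2+x3|^2 := (sq_abs _).symm
    have e2 : x1^2 = |x1|^2 := (sq_abs _).symm
    have e3 : x2^2 = |x2|^2 := (sq_abs _).symm
    have e4 : x3^2 = |x3|^2 := (sq_abs _).symm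
    rw [e1, e2, e3, e4]
    nlinarith [abs_nonneg (x1+x2+x3), sq_nonneg (|x1|+|x2|)]
  have hT0 : (0:ℝ) ≤ (x1+x2+x3)^2+x1^2+x2^2+x3^2 := by positivity
  have hsig : |(x1+x2)*(x2+x3)*(x1+x3)| ≤ 289/2048* |x3|^3 := by nlinarith
  refine ⟨by linarith, ?_, ?_⟩
  · calc |(x1+x2)*(x2+x3)*(x1+x3)| ≤ 289/2048* |x3|^3 := hsig
      _ ≤ 289/2048*(|x4|/4)^3 := by gcongr; linarith
      _ ≤ |x4|^3/16 := by nlinarith [pow_pos hK40 3]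
  · calc |(x1+x2)*(x2+x3)*(x1+x3)| * ((x1+x2+x3)^2+x1^2+x2^2+x3^2)
        ≤ (289/2048* |x3|^3) * (273/64* |x3|^2) := by
          exact mul_le_mul hsig hT hT0 (by positivity)
      _ = 78897/131072*(|x3| * |x3|^4) := by ring
      _ ≤ 78897/131072*((8/7* |x1+x2+x3|)*(|x4|/4)^4) := by
          have hA : |x3| ≤ 8/7* |x1+x2+x3| := by linarith
          have hB : |x3|^4 ≤ (|x4|/4)^4 := by
            apply pow_le_pow_left₀ (le_of_lt hK30) ; linarith
          exact mul_le_mul_of_nonneg_left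
            (mul_le_mul hA hB (by positivity) (by positivity)) (by norm_num)
      _ = 78897/29360128*(|x1+x2+x3| * |x4|^4) := by ring
      _ ≤ |x1+x2+x3| * |x4|^4/5 := by
          linarith [mul_nonneg (abs_nonneg (x1+x2+x3)) (pow_nonneg (abs_nonneg x4) 4)]

/-- bounds derived in case (ii) -/
lemma caseB (x1 x2 x3 x4 : ℝ) (m : ℝ) (hm : m = x1+x2+x3)
    (h5 : 64^5 * |x3|^5 ≤ |x4|^4) (h1 : 64 * |x3| ≤ |x4|)
    (h2 : |x2| ≤ |x3|) (h3 : |x1| ≤ |x2|) (hM1 : 1 ≤ |m|) :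
    |m| ≤ 9/32 * |x4| ∧ |(x1+x2)*(x2+x3)*(x1+x3)| ≤ |x4|^3/16 ∧
    |(x1+x2)*(x2+x3)*(x1+x3)| * (m^2+x1^2+x2^2+x3^2)
      ≤ |m| * |x4|^4/5 := by
  subst hm
  have hK10 : 0 ≤ |x1| := abs_nonneg _
  have hK30 : 0 ≤ |x3| := abs_nonneg _
  have hK40 : 0 ≤ |x4| := by nlinarith
  have hMu : |x1+x2+x3| ≤ 3 * |x3| := by
    calc |x1+x2+x3| ≤ |x1| + |x2| + |x3| := abs_add_three _ _ _
      _ ≤ 3 * |x3| := by linarith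
  have hsig0 : |(x1+x2)*(x2+x3)*(x1+x3)| ≤ (|x1|+|x2|)*(|x2|+|x3|)*(|x1|+|x3|) := by
    rw [abs_mul, abs_mul]
    gcongr <;> first | positivity | exact abs_add_le _ _
  have hsig1 : (|x1|+|x2|)*(|x2|+|x3|)*(|x1|+|x3|) ≤ (2 * |x3|)*(2 * |x3|)*(2 * |x3|) := by
    gcongr <;> linarith
  have hsig : |(x1+x2)*(x2+x3)*(x1+x3)| ≤ 8 * |x3|^3 := by nlinarith
  have hT : (x1+x2+x3)^2+x1^2+x2^2+x3^2 ≤ 12 * |x3|^2 := by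
    have e1 : (x1+x2+x3)^2 = |x1+x2+x3|^2 := (sq_abs _).symm
    have e2 : x1^2 = |x1|^2 := (sq_abs _).symm
    have e3 : x2^2 = |x2|^2 := (sq_abs _).symm
    have e4 : x3^2 = |x3|^2 := (sq_abs _).symm
    rw [e1, e2, e3, e4]
    nlinarith [abs_nonneg (x1+x2+x3)]
  have hT0 : (0:ℝ) ≤ (x1+x2+x3)^2+x1^2+x2^2+x3^2 := by positivity
  refine ⟨by linarith, ?_, ?_⟩
  · calc |(x1+x2)*(x2+x3)*(x1+x3)| ≤ 8 * |x3|^3 := hsig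
      _ ≤ 8 * (|x4|/64)^3 := by gcongr; linarith
      _ ≤ |x4|^3/16 := by nlinarith [pow_nonneg hK40 3]
  · calc |(x1+x2)*(x2+x3)*(x1+x3)| * ((x1+x2+x3)^2+x1^2+x2^2+x3^2)
        ≤ (8 * |x3|^3) * (12 * |x3|^2) := mul_le_mul hsig hT hT0 (by positivity)
      _ = 96 * |x3|^5 := by ring
      _ ≤ 96 * (|x4|^4/64^5) := by gcongr; nlinarith
      _ ≤ 1 * (|x4|^4/5) := by
          have : (0:ℝ) ≤ |x4|^4 := pow_nonneg hK40 4
          linarith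
      _ ≤ |x1+x2+x3| * |x4|^4/5 := by
          have : (0:ℝ) ≤ |x4|^4/5 := by positivity
          nlinarith

/-- bounds derived in case (iii) -/
lemma caseC (x1 x2 x3 x4 : ℝ)
    (h1 : 64 * |x3| < |x4|) (h2 : |x2| ≤ |x3|) (h3 : |x1| ≤ |x2|)
    (h4 : 16 * |x1| < |x1+x2+x3|) :
    |x1+x2+x3| ≤ 9/32 * |x4| ∧ |(x1+x2)*(x2+x3)*(x1+x3)| ≤ |x4|^3/16 ∧
    |(x1+x2)*(x2+x3)*(x1+x3)| * ((x1+x2+x3)^2+x1^2+x2^2+x3^2)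
      ≤ |x1+x2+x3| * |x4|^4/5 := by
  have hK10 : 0 ≤ |x1| := abs_nonneg _
  have hK30 : 0 ≤ |x3| := abs_nonneg _
  have hK40 : 0 < |x4| := lt_of_le_of_lt (by positivity) h1
  have hM0 : 0 ≤ |x1+x2+x3| := abs_nonneg _
  have hMu : |x1+x2+x3| ≤ 3 * |x3| := by
    calc |x1+x2+x3| ≤ |x1| + |x2| + |x3| := abs_add_three _ _ _
      _ ≤ 3 * |x3| := by linarith
  have h23 : |x2+x3| ≤ 17/16 * |x1+x2+x3| := by
    calc |x2+x3| = |(x1+x2+x3) + (-x1)| := by ring_nf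
      _ ≤ |x1+x2+x3| + |(-x1)| := abs_add_le _ _
      _ ≤ 17/16 * |x1+x2+x3| := by rw [abs_neg]; linarith
  have hsig0 : |(x1+x2)*(x2+x3)*(x1+x3)| ≤ (|x1|+|x2|) * |x2+x3| * (|x1|+|x3|) := by
    rw [abs_mul, abs_mul]
    gcongr <;> first | positivity | exact abs_add_le _ _
  have hsig : |(x1+x2)*(x2+x3)*(x1+x3)|
      ≤ (2 * |x3|) * (17/16 * |x1+x2+x3|) * (2 * |x3|) := by
    calc |(x1+x2)*(x2+x3)*(x1+x3)| ≤ (|x1|+|x2|) * |x2+x3| * (|x1|+|x3|) := hsig0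
      _ ≤ (2 * |x3|) * (17/16 * |x1+x2+x3|) * (2 * |x3|) := by
          gcongr <;> first | positivity | linarith
  have hT : (x1+x2+x3)^2+x1^2+x2^2+x3^2 ≤ 12 * |x3|^2 := by
    have e1 : (x1+x2+x3)^2 = |x1+x2+x3|^2 := (sq_abs _).symm
    have e2 : x1^2 = |x1|^2 := (sq_abs _).symm
    have e3 : x2^2 = |x2|^2 := (sq_abs _).symm
    have e4 : x3^2 = |x3|^2 := (sq_abs _).symm
    rw [e1, e2, e3, e4]
    nlinarith
  have hT0 : (0:ℝ) ≤ (x1+x2+x3)^2+x1^2+x2^2+x3^2 := by positivity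
  refine ⟨by linarith, ?_, ?_⟩
  · calc |(x1+x2)*(x2+x3)*(x1+x3)| ≤ (2 * |x3|) * (17/16 * |x1+x2+x3|) * (2 * |x3|) := hsig
      _ ≤ (2 * |x3|) * (17/16 * (3 * |x3|)) * (2 * |x3|) := by gcongr
      _ = 51/4 * |x3|^3 := by ring
      _ ≤ 51/4 * (|x4|/64)^3 := by gcongr; linarith
      _ ≤ |x4|^3/16 := by nlinarith [pow_pos hK40 3]
  · calc |(x1+x2)*(x2+x3)*(x1+x3)| * ((x1+x2+x3)^2+x1^2+x2^2+x3^2)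
        ≤ ((2 * |x3|) * (17/16 * |x1+x2+x3|) * (2 * |x3|)) * (12 * |x3|^2) :=
          mul_le_mul hsig hT hT0 (by positivity)
      _ = 51 * |x1+x2+x3| * |x3|^4 := by ring
      _ ≤ 51 * |x1+x2+x3| * (|x4|/64)^4 := by
          gcongr <;> linarith
      _ = 51/16777216 * (|x1+x2+x3| * |x4|^4) := by ring
      _ ≤ |x1+x2+x3| * |x4|^4/5 := by
          linarith [mul_nonneg hM0 (pow_nonneg (le_of_lt hK40) 4)]

/-- core lower bound: `|m|·|k₄|⁴ ≤ |Φ|` and `|Q| ≤ 2|k₄|³`. -/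
lemma phase_lb (a m x4 s σ T Q E : ℝ)
    (hs : s = m + x4) (hQ : Q = 3*(m*x4*s + σ))
    (hE : E = -(5*m*x4*s*(m^2+m*x4+x4^2) + 5/2*(σ*T)) + a*Q)
    (hT0 : 0 ≤ T)
    (hM1 : 1 ≤ |m|) (hK : 16 < |x4|) (ha : |a| ≤ |x4|/16)
    (hMK : |m| ≤ 9/32 * |x4|)
    (hsig : |σ| ≤ |x4|^3/16)
    (hsigT : |σ| * T ≤ |m| * |x4|^4/5) :
    |m| * |x4|^4 ≤ |E| ∧ |Q| ≤ 2 * |x4|^3 := by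
  have hK0 : (0:ℝ) < |x4| := by linarith
  have hM0 : (0:ℝ) < |m| := by linarith
  have hS0 : (0:ℝ) ≤ |s| := abs_nonneg _
  have hSl : 23/32 * |x4| ≤ |s| := by
    have : |x4| ≤ |s| + |m| := by
      calc |x4| = |s + (-m)| := by rw [hs]; ring_nf
        _ ≤ |s| + |(-m)| := abs_add_le _ _
        _ = |s| + |m| := by rw [abs_neg]
    linarith
  have hSu : |s| ≤ 41/32 * |x4| := by
    calc |s| ≤ |m| + |x4| := hs ▸ abs_add_le _ _
      _ ≤ 41/32 * |x4| := by linarith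
  have hQb : |Q| ≤ 2 * |x4|^3 := by
    have h1 : |Q| ≤ 3 * (|m| * |x4| * |s| + |σ|) := by
      rw [hQ, abs_mul]
      have e3 : |(3:ℝ)| = 3 := by norm_num
      rw [e3]
      have h2 := abs_add_le (m*x4*s) σ
      rw [abs_mul, abs_mul] at h2
      linarith
    have h2 : |m| * |x4| * |s| ≤ (9/32 * |x4|) * |x4| * (41/32 * |x4|) := by
      gcongr
    have h2b : (9/32 * |x4|) * |x4| * (41/32 * |x4|) = 369/1024 * |x4|^3 := by ring
    rw [h2b] at h2
    linarith [pow_pos hK0 3]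
  refine ⟨?_, hQb⟩
  have hW : 3/4 * |x4|^2 ≤ m^2+m*x4+x4^2 := by
    nlinarith [sq_nonneg (m + x4/2), sq_abs x4]
  have hW0 : (0:ℝ) ≤ m^2+m*x4+x4^2 := by nlinarith [pow_pos hK0 2]
  have hMainEq : |5*m*x4*s*(m^2+m*x4+x4^2)| = 5 * |m| * |x4| * |s| * (m^2+m*x4+x4^2) := by
    rw [abs_mul, abs_mul, abs_mul, abs_mul, abs_of_nonneg hW0]
    norm_num
  have hMain : 345/128 * (|m| * |x4|^4) ≤ 5 * |m| * |x4| * |s| * (m^2+m*x4+x4^2) := by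
    calc 345/128 * (|m| * |x4|^4) = 5 * |m| * |x4| * (23/32 * |x4|) * (3/4 * |x4|^2) := by
          ring
      _ ≤ 5 * |m| * |x4| * |s| * (3/4 * |x4|^2) := by gcongr
      _ ≤ 5 * |m| * |x4| * |s| * (m^2+m*x4+x4^2) := by gcongr
  have htri : |5*m*x4*s*(m^2+m*x4+x4^2)| ≤ |E| + 5/2 * (|σ| * T) + |a| * |Q| := by
    have heq : 5*m*x4*s*(m^2+m*x4+x4^2) = -E + (a*Q - 5/2*(σ*T)) := by
      rw [hE]; ring
    calc |5*m*x4*s*(m^2+m*x4+x4^2)| = |(-E) + (a*Q - 5/2*(σ*T))| := by rw [heq]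
      _ ≤ |(-E)| + |a*Q - 5/2*(σ*T)| := abs_add_le _ _
      _ ≤ |E| + (|a*Q| + |5/2*(σ*T)|) := by
          rw [abs_neg]
          have := abs_sub (a*Q) (5/2*(σ*T))
          linarith
      _ = |E| + 5/2 * (|σ| * T) + |a| * |Q| := by
          have e52 : |(5/2 : ℝ) * (σ * T)| = 5/2 * (|σ| * T) := by
            rw [abs_mul, abs_mul, abs_of_nonneg hT0, abs_of_nonneg (by norm_num : (0:ℝ) ≤ 5/2)]
          rw [e52, abs_mul]
          ring
  have haQ : |a| * |Q| ≤ |m| * |x4|^4/8 := by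
    have h1 : |a| * |Q| ≤ (|x4|/16) * (2 * |x4|^3) := by
      exact mul_le_mul ha hQb (abs_nonneg _) (by positivity)
    have h2 : (|x4|/16) * (2 * |x4|^3) = |x4|^4/8 := by ring
    have h3 : 1 * |x4|^4 ≤ |m| * |x4|^4 :=
      mul_le_mul_of_nonneg_right hM1 (le_of_lt (pow_pos hK0 4))
    linarith
  rw [hMainEq] at htri
  linarith [mul_pos hM0 (pow_pos hK0 4)]

set_option maxHeartbeats 1000000 in
/-- Nonvanishing and difference estimate for reciprocals of quartic phases under the
strengthened frequency assumptions (i), (ii) or (iii). -/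
theorem phi4_reciprocal_difference :
    ∃ C : ℝ, 0 < C ∧ ∀ (a b : ℝ) (k₁ k₂ k₃ k₄ : ℤ),
      ((|k₄| : ℤ) : ℝ) > 16 * max 1 (max |a| |b|) →
      k₁ + k₂ + k₃ ≠ 0 →
      ((|k₄| > 4 * |k₃| ∧ |k₃| > 16 * |k₂| ∧ |k₂| ≥ |k₁|) ∨
       (((|k₄| : ℤ) : ℝ) ^ ((4 : ℝ) / 5) > 64 * ((|k₃| : ℤ) : ℝ) ∧ |k₃| ≥ |k₂| ∧ |k₂| ≥ |k₁|) ∨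
       (|k₄| > 64 * |k₃| ∧ |k₃| ≥ |k₂| ∧ |k₂| ≥ |k₁| ∧ |k₁ + k₂ + k₃| > 16 * |k₁|)) →
      Phi4 a k₁ k₂ k₃ k₄ ≠ 0 ∧ Phi4 b k₁ k₂ k₃ k₄ ≠ 0 ∧
      |1 / Phi4 a k₁ k₂ k₃ k₄ - 1 / Phi4 b k₁ k₂ k₃ k₄| ≤
        C * (|a - b| / (((|k₁ + k₂ + k₃| : ℤ) : ℝ) * ((|k₄| : ℤ) : ℝ))) *
          min (1 / |Phi4 a k₁ k₂ k₃ k₄|) (1 / |Phi4 b k₁ k₂ k₃ k₄|) := by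
  refine ⟨2, by norm_num, ?_⟩
  intro a b k₁ k₂ k₃ k₄ hK hm0 hcase
  push_cast at hK ⊢
  set x1 : ℝ := (k₁ : ℝ) with hx1
  set x2 : ℝ := (k₂ : ℝ) with hx2
  set x3 : ℝ := (k₃ : ℝ) with hx3
  set x4 : ℝ := (k₄ : ℝ) with hx4
  have hida : ∀ c : ℝ, Phi4 c k₁ k₂ k₃ k₄ =
      -(5*(x1+x2+x3)*x4*(x1+x2+x3+x4)*((x1+x2+x3)^2+(x1+x2+x3)*x4+x4^2)
        + 5/2*(((x1+x2)*(x2+x3)*(x1+x3)) * ((x1+x2+x3)^2+x1^2+x2^2+x3^2)))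
      + c*(3*((x1+x2+x3)*x4*(x1+x2+x3+x4) + (x1+x2)*(x2+x3)*(x1+x3))) := by
    intro c
    simp only [Phi4, p, hx1, hx2, hx3, hx4]
    push_cast
    ring
  have hK16 : 16 < |x4| := by
    have h1 : (1:ℝ) ≤ max 1 (max |a| |b|) := le_max_left _ _
    linarith
  have hK0 : (0:ℝ) < |x4| := by linarith
  have ha : |a| ≤ |x4| / 16 := by
    have h1 : |a| ≤ max 1 (max |a| |b|) := le_trans (le_max_left _ _) (le_max_right _ _)
    linarith
  have hb : |b| ≤ |x4| / 16 := by
    have h1 : |b| ≤ max 1 (max |a| |b|) := le_trans (le_max_right _ _) (le_max_right _ _)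
    linarith
  have hm1 : (1:ℝ) ≤ |x1+x2+x3| := by
    have h1 : (1:ℤ) ≤ |k₁+k₂+k₃| := Int.one_le_abs hm0
    have h2 : ((1:ℤ):ℝ) ≤ ((|k₁+k₂+k₃| : ℤ):ℝ) := by exact_mod_cast h1
    push_cast at h2
    exact h2
  have hM0 : (0:ℝ) < |x1+x2+x3| := by linarith
  obtain ⟨hMK, hsig, hsigT⟩ : |x1+x2+x3| ≤ 9/32 * |x4| ∧
      |(x1+x2)*(x2+x3)*(x1+x3)| ≤ |x4|^3/16 ∧
      |(x1+x2)*(x2+x3)*(x1+x3)| * ((x1+x2+x3)^2+x1^2+x2^2+x3^2)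
        ≤ |x1+x2+x3| * |x4|^4/5 := by
    rcases hcase with ⟨c1, c2, c3⟩ | ⟨c1, c2, c3⟩ | ⟨c1, c2, c3, c4⟩
    · have r1 : ((4 * |k₃| : ℤ) : ℝ) < ((|k₄| : ℤ) : ℝ) := by exact_mod_cast c1
      have r2 : ((16 * |k₂| : ℤ) : ℝ) < ((|k₃| : ℤ) : ℝ) := by exact_mod_cast c2
      have r3 : ((|k₁| : ℤ) : ℝ) ≤ ((|k₂| : ℤ) : ℝ) := by exact_mod_cast c3
      push_cast at r1 r2 r3
      exact caseA _ _ _ _ r1 r2 r3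
    · have r2 : ((|k₂| : ℤ) : ℝ) ≤ ((|k₃| : ℤ) : ℝ) := by exact_mod_cast c2
      have r3 : ((|k₁| : ℤ) : ℝ) ≤ ((|k₂| : ℤ) : ℝ) := by exact_mod_cast c3
      push_cast at c1 r2 r3
      have hK1 : (1:ℝ) ≤ |x4| := by linarith
      have hup : |x4| ^ ((4:ℝ)/5) ≤ |x4| := by
        calc |x4| ^ ((4:ℝ)/5) ≤ |x4| ^ (1:ℝ) :=
              Real.rpow_le_rpow_of_exponent_le hK1 (by norm_num)
          _ = |x4| := Real.rpow_one _
      have h64 : 64 * |x3| ≤ |x4| := by linarith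
      have h5 : (64:ℝ)^5 * |x3|^5 ≤ |x4|^4 := by
        have h5a : (64 * |x3|)^5 ≤ (|x4| ^ ((4:ℝ)/5))^5 :=
          pow_le_pow_left₀ (by positivity) (le_of_lt c1) 5
        have he : (|x4| ^ ((4:ℝ)/5))^(5:ℕ) = |x4|^4 := by
          rw [← Real.rpow_natCast (|x4| ^ ((4:ℝ)/5)) 5,
            ← Real.rpow_mul (le_of_lt hK0)]
          norm_num
        rw [he] at h5a
        calc (64:ℝ)^5 * |x3|^5 = (64 * |x3|)^5 := by ring
          _ ≤ |x4|^4 := h5a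
      exact caseB x1 x2 x3 x4 (x1+x2+x3) rfl h5 h64 r2 r3 hm1
    · have r1 : ((64 * |k₃| : ℤ) : ℝ) < ((|k₄| : ℤ) : ℝ) := by exact_mod_cast c1
      have r2 : ((|k₂| : ℤ) : ℝ) ≤ ((|k₃| : ℤ) : ℝ) := by exact_mod_cast c2
      have r3 : ((|k₁| : ℤ) : ℝ) ≤ ((|k₂| : ℤ) : ℝ) := by exact_mod_cast c3
      have r4 : ((16 * |k₁| : ℤ) : ℝ) < ((|k₁ + k₂ + k₃| : ℤ) : ℝ) := by exact_mod_cast c4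
      push_cast at r1 r2 r3 r4
      exact caseC _ _ _ _ r1 r2 r3 r4
  obtain ⟨hFa, hQb⟩ := phase_lb a (x1+x2+x3) x4 (x1+x2+x3+x4)
      ((x1+x2)*(x2+x3)*(x1+x3)) ((x1+x2+x3)^2+x1^2+x2^2+x3^2)
      (3*((x1+x2+x3)*x4*(x1+x2+x3+x4) + (x1+x2)*(x2+x3)*(x1+x3)))
      (Phi4 a k₁ k₂ k₃ k₄) rfl rfl (hida a) (by positivity) hm1 hK16 ha hMK hsig hsigT
  obtain ⟨hFb, -⟩ := phase_lb b (x1+x2+x3) x4 (x1+x2+x3+x4)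
      ((x1+x2)*(x2+x3)*(x1+x3)) ((x1+x2+x3)^2+x1^2+x2^2+x3^2)
      (3*((x1+x2+x3)*x4*(x1+x2+x3+x4) + (x1+x2)*(x2+x3)*(x1+x3)))
      (Phi4 b k₁ k₂ k₃ k₄) rfl rfl (hida b) (by positivity) hm1 hK16 hb hMK hsig hsigT
  have hMK4 : (0:ℝ) < |x1+x2+x3| * |x4|^4 := by positivity
  have hFa0 : (0:ℝ) < |Phi4 a k₁ k₂ k₃ k₄| := lt_of_lt_of_le hMK4 hFa
  have hFb0 : (0:ℝ) < |Phi4 b k₁ k₂ k₃ k₄| := lt_of_lt_of_le hMK4 hFb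
  have hFane : Phi4 a k₁ k₂ k₃ k₄ ≠ 0 := abs_pos.mp hFa0
  have hFbne : Phi4 b k₁ k₂ k₃ k₄ ≠ 0 := abs_pos.mp hFb0
  refine ⟨hFane, hFbne, ?_⟩
  have hdiff : Phi4 a k₁ k₂ k₃ k₄ - Phi4 b k₁ k₂ k₃ k₄ =
      (a-b)*(3*((x1+x2+x3)*x4*(x1+x2+x3+x4) + (x1+x2)*(x2+x3)*(x1+x3))) := by
    rw [hida a, hida b]; ring
  have habs : |1 / Phi4 a k₁ k₂ k₃ k₄ - 1 / Phi4 b k₁ k₂ k₃ k₄| =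
      |a-b| * |3*((x1+x2+x3)*x4*(x1+x2+x3+x4) + (x1+x2)*(x2+x3)*(x1+x3))|
        / (|Phi4 a k₁ k₂ k₃ k₄| * |Phi4 b k₁ k₂ k₃ k₄|) := by
    have e1 : 1 / Phi4 a k₁ k₂ k₃ k₄ - 1 / Phi4 b k₁ k₂ k₃ k₄ =
        -(Phi4 a k₁ k₂ k₃ k₄ - Phi4 b k₁ k₂ k₃ k₄)
          / (Phi4 a k₁ k₂ k₃ k₄ * Phi4 b k₁ k₂ k₃ k₄) := by
      field_simp
      ring
    rw [e1, hdiff, abs_div, abs_neg, abs_mul (a-b), abs_mul (Phi4 a k₁ k₂ k₃ k₄)]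
  rw [habs]
  rcases le_total |Phi4 a k₁ k₂ k₃ k₄| |Phi4 b k₁ k₂ k₃ k₄| with hcmp | hcmp
  · rw [min_eq_right (one_div_le_one_div_of_le hFa0 hcmp)]
    have key : |3*((x1+x2+x3)*x4*(x1+x2+x3+x4) + (x1+x2)*(x2+x3)*(x1+x3))|
        * (|x1+x2+x3| * |x4|) ≤ 2 * |Phi4 a k₁ k₂ k₃ k₄| := by
      calc |3*((x1+x2+x3)*x4*(x1+x2+x3+x4) + (x1+x2)*(x2+x3)*(x1+x3))|
            * (|x1+x2+x3| * |x4|) ≤ (2 * |x4|^3) * (|x1+x2+x3| * |x4|) :=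
            mul_le_mul_of_nonneg_right hQb (by positivity)
        _ = 2 * (|x1+x2+x3| * |x4|^4) := by ring
        _ ≤ 2 * |Phi4 a k₁ k₂ k₃ k₄| := by linarith
    calc |a-b| * |3*((x1+x2+x3)*x4*(x1+x2+x3+x4) + (x1+x2)*(x2+x3)*(x1+x3))|
          / (|Phi4 a k₁ k₂ k₃ k₄| * |Phi4 b k₁ k₂ k₃ k₄|)
        ≤ (2 * |a-b|) / ((|x1+x2+x3| * |x4|) * |Phi4 b k₁ k₂ k₃ k₄|) := by
          rw [div_le_div_iff₀ (by positivity) (by positivity)]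
          nlinarith [mul_le_mul_of_nonneg_left key
            (mul_nonneg (abs_nonneg (a-b)) (abs_nonneg (Phi4 b k₁ k₂ k₃ k₄)))]
      _ = 2 * (|a-b| / (|x1+x2+x3| * |x4|)) * (1 / |Phi4 b k₁ k₂ k₃ k₄|) := by
          field_simp
  · rw [min_eq_left (one_div_le_one_div_of_le hFb0 hcmp)]
    have key : |3*((x1+x2+x3)*x4*(x1+x2+x3+x4) + (x1+x2)*(x2+x3)*(x1+x3))|
        * (|x1+x2+x3| * |x4|) ≤ 2 * |Phi4 b k₁ k₂ k₃ k₄| := by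
      calc |3*((x1+x2+x3)*x4*(x1+x2+x3+x4) + (x1+x2)*(x2+x3)*(x1+x3))|
            * (|x1+x2+x3| * |x4|) ≤ (2 * |x4|^3) * (|x1+x2+x3| * |x4|) :=
            mul_le_mul_of_nonneg_right hQb (by positivity)
        _ = 2 * (|x1+x2+x3| * |x4|^4) := by ring
        _ ≤ 2 * |Phi4 b k₁ k₂ k₃ k₄| := by linarith
    calc |a-b| * |3*((x1+x2+x3)*x4*(x1+x2+x3+x4) + (x1+x2)*(x2+x3)*(x1+x3))|
          / (|Phi4 a k₁ k₂ k₃ k₄| * |Phi4 b k₁ k₂ k₃ k₄|)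
        ≤ (2 * |a-b|) / ((|x1+x2+x3| * |x4|) * |Phi4 a k₁ k₂ k₃ k₄|) := by
          rw [div_le_div_iff₀ (by positivity) (by positivity)]
          nlinarith [mul_le_mul_of_nonneg_left key
            (mul_nonneg (abs_nonneg (a-b)) (abs_nonneg (Phi4 a k₁ k₂ k₃ k₄)))]
      _ = 2 * (|a-b| / (|x1+x2+x3| * |x4|)) * (1 / |Phi4 a k₁ k₂ k₃ k₄|) := by
          field_simp
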